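/- Let c₁ ≠ 0 be a real number and let f(x) = −c₁(1 + e^{c₁x})/(1 − e^{c₁x}), defined on any open interval on which e^{c₁x} ≠ 1 (for instance on (0,∞)). Then f satisfies the ordinary differential equation f″ + f·f′ = 0, and f is nowhere zero on its domain. -/

import Mathlib

noncomputable section

/-- The function `f(x) = −c₁(1+e^{c₁x})/(1−e^{c₁x})` satisfies the ODE `f″ + ff′ = 0` and
is nowhere zero on `(0,∞)` (an open interval on which `e^{c₁x} ≠ 1`). -/
theorem ode_solution (c₁ : ℝ) (hc₁ : c₁ ≠ 0) :
    ∀ x ∈ Set.Ioi (0 : ℝ),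
      deriv (deriv (fun t : ℝ => -c₁ * (1 + Real.exp (c₁ * t)) / (1 - Real.exp (c₁ * t)))) x
        + (-c₁ * (1 + Real.exp (c₁ * x)) / (1 - Real.exp (c₁ * x)))
          * deriv (fun t : ℝ => -c₁ * (1 + Real.exp (c₁ * t)) / (1 - Real.exp (c₁ * t))) x
        = 0 ∧
      -c₁ * (1 + Real.exp (c₁ * x)) / (1 - Real.exp (c₁ * x)) ≠ 0 := by
  set f : ℝ → ℝ := fun t => -c₁ * (1 + Real.exp (c₁ * t)) / (1 - Real.exp (c₁ * t)) with hf_def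
  set g : ℝ → ℝ := fun t => -2 * c₁ ^ 2 * Real.exp (c₁ * t) / (1 - Real.exp (c₁ * t)) ^ 2
    with hg_def
  have hne : ∀ y : ℝ, y ≠ 0 → 1 - Real.exp (c₁ * y) ≠ 0 := by
    intro y hy h
    have h1 : Real.exp (c₁ * y) = 1 := by linarith
    have h2 : Real.exp (c₁ * y) = Real.exp 0 := by rw [Real.exp_zero]; exact h1
    exact mul_ne_zero hc₁ hy (Real.exp_injective h2)
  have hexp : ∀ y : ℝ, HasDerivAt (fun t => Real.exp (c₁ * t)) (c₁ * Real.exp (c₁ * y)) y := by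
    intro y
    simpa [mul_comm] using ((hasDerivAt_id y).const_mul c₁).exp
  have hfderiv : ∀ y : ℝ, y ≠ 0 → HasDerivAt f (g y) y := by
    intro y hy
    have h1 : HasDerivAt (fun t => -c₁ * (1 + Real.exp (c₁ * t)))
        (-c₁ * (c₁ * Real.exp (c₁ * y))) y := ((hexp y).const_add 1).const_mul (-c₁)
    have h2 : HasDerivAt (fun t => 1 - Real.exp (c₁ * t))
        (-(c₁ * Real.exp (c₁ * y))) y := (hexp y).const_sub 1
    have H := h1.div h2 (hne y hy)
    refine H.congr_deriv ?_
    have h3 := hne y hy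
    rw [div_eq_div_iff (pow_ne_zero 2 h3) (pow_ne_zero 2 h3)]
    ring
  have hgderiv : ∀ y : ℝ, y ≠ 0 → HasDerivAt g
      (-2 * c₁ ^ 3 * Real.exp (c₁ * y) * (1 + Real.exp (c₁ * y)) /
        (1 - Real.exp (c₁ * y)) ^ 3) y := by
    intro y hy
    have h1 : HasDerivAt (fun t => -2 * c₁ ^ 2 * Real.exp (c₁ * t))
        (-2 * c₁ ^ 2 * (c₁ * Real.exp (c₁ * y))) y := (hexp y).const_mul _
    have h2 : HasDerivAt (fun t => (1 - Real.exp (c₁ * t)) ^ 2)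
        ((2 : ℕ) * (1 - Real.exp (c₁ * y)) ^ 1 * (-(c₁ * Real.exp (c₁ * y)))) y :=
      ((hexp y).const_sub 1).pow 2
    have H := h1.div h2 (pow_ne_zero 2 (hne y hy))
    refine H.congr_deriv ?_
    have h3 := hne y hy
    rw [div_eq_div_iff (pow_ne_zero 2 (pow_ne_zero 2 h3)) (pow_ne_zero 3 h3)]
    ring
  intro x hx
  have hx0 : x ≠ 0 := ne_of_gt hx
  have hnex := hne x hx0
  have hev : deriv f =ᶠ[nhds x] g := by
    filter_upwards [isOpen_compl_singleton.mem_nhds (by simpa using hx0 :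
        x ∈ ({(0 : ℝ)}ᶜ : Set ℝ))] with y hy
    exact (hfderiv y hy).deriv
  have hd1 : deriv f x = g x := (hfderiv x hx0).deriv
  have hd2 : deriv (deriv f) x = deriv g x := hev.deriv_eq
  have hd3 : deriv g x = -2 * c₁ ^ 3 * Real.exp (c₁ * x) * (1 + Real.exp (c₁ * x)) /
      (1 - Real.exp (c₁ * x)) ^ 3 := (hgderiv x hx0).deriv
  constructor
  · rw [hd2, hd3, hd1, hg_def]
    field_simp
    ring
  · exact div_ne_zero (mul_ne_zero (neg_ne_zero.mpr hc₁) (by positivity)) hnex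

end
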